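/- Let A be an r1×n1 matrix and B an r2×n2 matrix over GF(2). Then rank of the block matrix (A ⊗ I_{n2} , I_{r1} ⊗ Bᵀ) equals n2·rank(A) + r1·rank(B) − rank(A)·rank(B). -/

import Mathlib

open Matrix Kronecker Module

section Aux

variable {K : Type*} [Field K]

/-- Every matrix over a field has a generalized inverse. -/
private lemma exists_ginv {m n : Type*} [Fintype m] [Fintype n] [DecidableEq m] [DecidableEq n]
    (M : Matrix m n K) : ∃ G : Matrix n m K, M * G * M = M := by
  let f : (n → K) →ₗ[K] (m → K) := M.mulVecLin
  obtain ⟨q, hq⟩ := Submodule.exists_isCompl (LinearMap.range f)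
  obtain ⟨s, hs⟩ := f.rangeRestrict.exists_rightInverse_of_surjective
    (LinearMap.range_eq_top.2 f.surjective_rangeRestrict)
  set π := (LinearMap.range f).projectionOnto q hq with hπ
  refine ⟨LinearMap.toMatrix' (s ∘ₗ π), ?_⟩
  have hfs : ∀ v : LinearMap.range f, f (s v) = (v : m → K) := by
    intro v
    have := LinearMap.congr_fun hs v
    simpa [LinearMap.rangeRestrict] using congrArg Subtype.val this
  apply Matrix.toLin'.injective
  refine LinearMap.ext fun x => ?_
  have h1 : Matrix.toLin' M = f := rfl
  simp only [Matrix.toLin'_mul, LinearMap.comp_apply, Matrix.toLin'_toMatrix', h1]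
  have hmem : f x ∈ LinearMap.range f := LinearMap.mem_range_self f x
  have hπx : π (f x) = ⟨f x, hmem⟩ := by
    simpa using Submodule.projectionOnto_apply_left hq ⟨f x, hmem⟩
  simp [LinearMap.comp_apply, hπx, hfs]

private lemma finrank_range_tensorMap {V V' W W' : Type*}
    [AddCommGroup V] [AddCommGroup V'] [AddCommGroup W] [AddCommGroup W']
    [Module K V] [Module K V'] [Module K W] [Module K W']
    [FiniteDimensional K V] [FiniteDimensional K W]
    (f : V →ₗ[K] V') (g : W →ₗ[K] W') :
    finrank K (LinearMap.range (TensorProduct.map f g)) =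
      finrank K (LinearMap.range f) * finrank K (LinearMap.range g) := by
  have h1 : LinearMap.range (TensorProduct.map f g) =
      LinearMap.range (TensorProduct.mapIncl (LinearMap.range f) (LinearMap.range g)) := by
    rw [TensorProduct.range_map_eq_span_tmul, TensorProduct.range_mapIncl,
      Submodule.map₂_eq_span_image2]
    congr 1
    ext t
    constructor
    · rintro ⟨m, n, rfl⟩
      exact Set.mem_image2_of_mem ⟨m, rfl⟩ ⟨n, rfl⟩
    · rintro ⟨-, ⟨m, rfl⟩, -, ⟨n, rfl⟩, rfl⟩
      exact ⟨m, n, rfl⟩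
  rw [h1, LinearMap.finrank_range_of_inj
      (Module.Flat.tensorProduct_mapIncl_injective_of_right _ _),
    Module.finrank_tensorProduct]

private lemma rank_kronecker' {l m p q : Type*} [Fintype l] [Fintype m] [Fintype p] [Fintype q]
    [DecidableEq l] [DecidableEq m] [DecidableEq p] [DecidableEq q]
    (M : Matrix l m K) (N : Matrix p q K) : (M ⊗ₖ N).rank = M.rank * N.rank := by
  rw [rank_eq_finrank_range_toLin (M ⊗ₖ N)
      ((Pi.basisFun K l).tensorProduct (Pi.basisFun K p))
      ((Pi.basisFun K m).tensorProduct (Pi.basisFun K q)),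
    Matrix.toLin_kronecker, finrank_range_tensorMap,
    ← rank_eq_finrank_range_toLin, ← rank_eq_finrank_range_toLin]

end Aux

/-- Rank of the X-check matrix of a hypergraph product code. -/
theorem hgp_rank_HX (r1 n1 r2 n2 : ℕ)
    (A : Matrix (Fin r1) (Fin n1) (ZMod 2))
    (B : Matrix (Fin r2) (Fin n2) (ZMod 2)) :
    (Matrix.fromCols (A ⊗ₖ (1 : Matrix (Fin n2) (Fin n2) (ZMod 2)))
        ((1 : Matrix (Fin r1) (Fin r1) (ZMod 2)) ⊗ₖ Bᵀ)).rank =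
      n2 * A.rank + r1 * B.rank - A.rank * B.rank := by
  set M1 : Matrix (Fin r1 × Fin n2) (Fin n1 × Fin n2) (ZMod 2) :=
    A ⊗ₖ (1 : Matrix (Fin n2) (Fin n2) (ZMod 2)) with hM1
  set M2 : Matrix (Fin r1 × Fin n2) (Fin r1 × Fin r2) (ZMod 2) :=
    (1 : Matrix (Fin r1) (Fin r1) (ZMod 2)) ⊗ₖ Bᵀ with hM2
  set U := LinearMap.range M1.mulVecLin with hU
  set W := LinearMap.range M2.mulVecLin with hW
  set T := LinearMap.range (A ⊗ₖ Bᵀ).mulVecLin with hT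
  -- step A : the rank of the block matrix is the dimension of U ⊔ W
  have hrange : LinearMap.range (Matrix.fromCols M1 M2).mulVecLin = U ⊔ W := by
    apply le_antisymm
    · rintro - ⟨x, rfl⟩
      have hx : x = Sum.elim (x ∘ Sum.inl) (x ∘ Sum.inr) := by
        funext i; cases i <;> rfl
      rw [Matrix.mulVecLin_apply, hx, Matrix.fromCols_mulVec_sumElim]
      exact Submodule.add_mem_sup ⟨_, rfl⟩ ⟨_, rfl⟩
    · refine sup_le ?_ ?_
      · rintro - ⟨x, rfl⟩
        refine ⟨Sum.elim x 0, ?_⟩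
        simp [Matrix.fromCols_mulVec_sumElim]
      · rintro - ⟨x, rfl⟩
        refine ⟨Sum.elim 0 x, ?_⟩
        simp [Matrix.fromCols_mulVec_sumElim]
  -- step B : U ⊓ W = T
  have hinf : U ⊓ W = T := by
    apply le_antisymm
    · rintro v ⟨⟨x, hx⟩, ⟨y, hy⟩⟩
      obtain ⟨G, hG⟩ := exists_ginv A
      obtain ⟨H, hH⟩ := exists_ginv Bᵀ
      refine ⟨(G ⊗ₖ H) *ᵥ v, ?_⟩
      simp only [Matrix.mulVecLin_apply] at hx hy ⊢
      calc (A ⊗ₖ Bᵀ) *ᵥ ((G ⊗ₖ H) *ᵥ v)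
          = ((A * G) ⊗ₖ (Bᵀ * H)) *ᵥ v := by
            rw [Matrix.mulVec_mulVec, ← Matrix.mul_kronecker_mul]
        _ = ((A * G * A) ⊗ₖ (Bᵀ * H * 1)) *ᵥ x := by
            rw [← hx, hM1, Matrix.mulVec_mulVec, ← Matrix.mul_kronecker_mul]
        _ = (A ⊗ₖ (Bᵀ * H * 1)) *ᵥ x := by rw [hG]
        _ = ((1 : Matrix (Fin r1) (Fin r1) (ZMod 2)) ⊗ₖ (Bᵀ * H)) *ᵥ (M1 *ᵥ x) := by
            rw [hM1, Matrix.mulVec_mulVec, ← Matrix.mul_kronecker_mul, Matrix.one_mul,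
              Matrix.mul_one]
        _ = (((1 : Matrix (Fin r1) (Fin r1) (ZMod 2)) * 1) ⊗ₖ (Bᵀ * H * Bᵀ)) *ᵥ y := by
            rw [hx, ← hy, hM2, Matrix.mulVec_mulVec, ← Matrix.mul_kronecker_mul,
              Matrix.mul_assoc]
        _ = v := by rw [hH, Matrix.one_mul, ← hM2, hy]
    · have e1 : A ⊗ₖ Bᵀ = M1 * ((1 : Matrix (Fin n1) (Fin n1) (ZMod 2)) ⊗ₖ Bᵀ) := by
        rw [hM1, ← Matrix.mul_kronecker_mul, Matrix.mul_one, Matrix.one_mul]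
      have e2 : A ⊗ₖ Bᵀ = M2 * (A ⊗ₖ (1 : Matrix (Fin r2) (Fin r2) (ZMod 2))) := by
        rw [hM2, ← Matrix.mul_kronecker_mul, Matrix.mul_one, Matrix.one_mul]
      refine le_inf ?_ ?_
      · rw [hT, e1, Matrix.mulVecLin_mul]
        exact LinearMap.range_comp_le_range _ _
      · rw [hT, e2, Matrix.mulVecLin_mul]
        exact LinearMap.range_comp_le_range _ _
  -- dimensions
  have hdimU : Module.finrank (ZMod 2) U = A.rank * n2 := by
    have h : Module.finrank (ZMod 2) U = M1.rank := rfl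
    rw [h, hM1, rank_kronecker', Matrix.rank_one, Fintype.card_fin, mul_comm]
  have hdimW : Module.finrank (ZMod 2) W = r1 * B.rank := by
    have h : Module.finrank (ZMod 2) W = M2.rank := rfl
    rw [h, hM2, rank_kronecker', Matrix.rank_one, Fintype.card_fin, Matrix.rank_transpose]
  have hdimT : Module.finrank (ZMod 2) T = A.rank * B.rank := by
    have h : Module.finrank (ZMod 2) T = (A ⊗ₖ Bᵀ).rank := rfl
    rw [h, rank_kronecker', Matrix.rank_transpose]
  have hsum := Submodule.finrank_sup_add_finrank_inf_eq U W
  rw [hinf, hdimU, hdimW, hdimT] at hsum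
  have hfinal : (Matrix.fromCols M1 M2).rank = Module.finrank (ZMod 2) ↥(U ⊔ W) := by
    have h : (Matrix.fromCols M1 M2).rank =
        Module.finrank (ZMod 2) ↥(LinearMap.range (Matrix.fromCols M1 M2).mulVecLin) := rfl
    rw [h, hrange]
  rw [Nat.mul_comm A.rank n2] at hsum
  rw [hfinal, ← hsum, Nat.add_sub_cancel]
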